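/- With the notation below, suppose b_0+b_2 ≢ b_1+b_3 (mod 2). Then: (1) if (b_0b_2+b_1b_3, c_0c_2+c_1c_3) ≡ (0,0) or (2,2) (mod 4), then D_4(b)·D_4(c) = (8k+1)(8l+1) for some integers k ≡ l (mod 2); (2) if (b_0b_2+b_1b_3, c_0c_2+c_1c_3) ≡ (0,2) or (2,0) (mod 4), then D_4(b)·D_4(c) = (8k+1)(8l+1) for some integers k ≢ l (mod 2); (3) if (b_0b_2+b_1b_3, c_0c_2+c_1c_3) ≡ (1,1) or (−1,−1) (mod 4), then D_4(b)·D_4(c) = (8k−3)(8l−3) for some integers k ≡ l (mod 2); (4) if (b_0b_2+b_1b_3, c_0c_2+c_1c_3) ≡ (1,−1) or (−1,1) (mod 4), then D_4(b)·D_4(c) = (8k−3)(8l−3) for some integers k ≢ l (mod 2). -/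

import Mathlib

open Matrix Complex

def D4 (x0 x1 x2 x3 : ℤ) : ℤ :=
  (Matrix.of ![![x0, x1, x2, x3], ![x3, x0, x1, x2], ![x2, x3, x0, x1], ![x1, x2, x3, x0]]).det

def bI (a : ℕ → ℤ) (i : ℕ) : ℤ := (a i + a (i + 8)) + (a (i + 4) + a (i + 12))

def cI (a : ℕ → ℤ) (i : ℕ) : ℤ := (a i + a (i + 8)) - (a (i + 4) + a (i + 12))

lemma D4_eq (x0 x1 x2 x3 : ℤ) :
    D4 x0 x1 x2 x3 = ((x0+x2)^2-(x1+x3)^2)*((x0-x2)^2+(x1-x3)^2) := by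
  simp [D4, Matrix.det_succ_row_zero, Fin.sum_univ_succ, Fin.succAbove]
  ring

lemma caseA' (x0 x1 x2 x3 u v U : ℤ) (hu : x0 + x2 = 2*u+1) (hv : x1 + x3 = 2*v)
    (hU : u*(u+1) = U+U) :
    D4 x0 x1 x2 x3 - (1 - 4*(x0*x2+x1*x3))
      = 16*(U + (u*(u+1) - v^2)*((x0-u)*((x0-u)-1) + (x1-v)^2)) := by
  have h2 : x2 = 2*u+1-x0 := by omega
  have h3 : x3 = 2*v-x1 := by omega
  subst h2 h3
  rw [D4_eq]
  linear_combination 8*hU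

lemma caseB' (x0 x1 x2 x3 u v M Z : ℤ) (hu : x0 + x2 = 2*u) (hv : x1 + x3 = 2*v+1)
    (hM : x0*(2*u-x0-1) = M+M) (hZ : (x1-v)*((x1-v)-1) = Z+Z) :
    D4 x0 x1 x2 x3 - (-1 - 4*(x0*x2+x1*x3) + 8*x0)
      = 16*((u^2 - v*(v+1))*((x0-u)^2 + (x1-v)*((x1-v)-1)) + M - Z) := by
  have h2 : x2 = 2*u-x0 := by omega
  have h3 : x3 = 2*v+1-x1 := by omega
  subst h2 h3
  rw [D4_eq]
  linear_combination 8*hM - 8*hZ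

lemma caseA (x0 x1 x2 x3 : ℤ) (h0 : (x0+x2) % 2 = 1) (h1 : (x1+x3) % 2 = 0) :
    (D4 x0 x1 x2 x3) % 16 = (1 - 4*(x0*x2+x1*x3)) % 16 := by
  obtain ⟨u, hu⟩ : ∃ u, x0+x2 = 2*u+1 := ⟨(x0+x2-1)/2, by omega⟩
  obtain ⟨v, hv⟩ : ∃ v, x1+x3 = 2*v := ⟨(x1+x3)/2, by omega⟩
  obtain ⟨U, hU⟩ := Int.even_mul_succ_self u
  have h := caseA' x0 x1 x2 x3 u v U hu hv hU
  have h2 : (1 - 4*(x0*x2+x1*x3)) ≡ D4 x0 x1 x2 x3 [ZMOD 16] :=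
    Int.modEq_iff_dvd.mpr ⟨_, h⟩
  exact h2.symm

lemma caseB (x0 x1 x2 x3 : ℤ) (h0 : (x0+x2) % 2 = 0) (h1 : (x1+x3) % 2 = 1) :
    (D4 x0 x1 x2 x3) % 16 = (-1 - 4*(x0*x2+x1*x3) + 8*x0) % 16 := by
  obtain ⟨u, hu⟩ : ∃ u, x0+x2 = 2*u := ⟨(x0+x2)/2, by omega⟩
  obtain ⟨v, hv⟩ : ∃ v, x1+x3 = 2*v+1 := ⟨(x1+x3-1)/2, by omega⟩
  obtain ⟨M, hM⟩ : ∃ M, x0*(2*u-x0-1) = M+M := by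
    rcases Int.even_mul_succ_self x0 with ⟨m, hm⟩
    exact ⟨u*x0 - m, by linear_combination -hm⟩
  obtain ⟨Z, hZ⟩ : ∃ Z, (x1-v)*((x1-v)-1) = Z+Z := by
    rcases Int.even_mul_succ_self (x1-v-1) with ⟨m, hm⟩
    exact ⟨m, by linear_combination hm⟩
  have h := caseB' x0 x1 x2 x3 u v M Z hu hv hM hZ
  have h2 : (-1 - 4*(x0*x2+x1*x3) + 8*x0) ≡ D4 x0 x1 x2 x3 [ZMOD 16] :=
    Int.modEq_iff_dvd.mpr ⟨_, h⟩
  exact h2.symm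

lemma mulres (D E r1 r2 : ℤ) (h1 : D % 16 = r1) (h2 : E % 16 = r2) :
    (D*E) % 16 = (r1*r2) % 16 := by
  have g1 : D ≡ r1 [ZMOD 16] := by unfold Int.ModEq; omega
  have g2 : E ≡ r2 [ZMOD 16] := by unfold Int.ModEq; omega
  exact g1.mul g2

lemma packA (P : ℤ) (hP : P % 16 = 1) :
    ∃ k l : ℤ, k ≡ l [ZMOD 2] ∧ P = (8*k+1)*(8*l+1) := by
  refine ⟨(P-1)/8, 0, ?_, ?_⟩
  · unfold Int.ModEq; omega
  · have h8 : 8*((P-1)/8)+1 = P := by omega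
    rw [h8]; ring

lemma packB (P : ℤ) (hP : P % 16 = 9) :
    ∃ k l : ℤ, ¬ (k ≡ l [ZMOD 2]) ∧ P = (8*k+1)*(8*l+1) := by
  refine ⟨(P-1)/8, 0, ?_, ?_⟩
  · unfold Int.ModEq; omega
  · have h8 : 8*((P-1)/8)+1 = P := by omega
    rw [h8]; ring

lemma packC (D E : ℤ) (hD : D % 16 = 13 ∨ D % 16 = 5) (hE : E % 16 = D % 16) :
    ∃ k l : ℤ, (k ≡ l [ZMOD 2]) ∧ D*E = (8*k-3)*(8*l-3) := by
  refine ⟨(D+3)/8, (E+3)/8, ?_, ?_⟩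
  · unfold Int.ModEq; omega
  · have h8 : 8*((D+3)/8)-3 = D := by omega
    have h9 : 8*((E+3)/8)-3 = E := by omega
    rw [h8, h9]

lemma packD (D E : ℤ) (hD : (D % 16 = 13 ∧ E % 16 = 5) ∨ (D % 16 = 5 ∧ E % 16 = 13)) :
    ∃ k l : ℤ, ¬ (k ≡ l [ZMOD 2]) ∧ D*E = (8*k-3)*(8*l-3) := by
  refine ⟨(D+3)/8, (E+3)/8, ?_, ?_⟩
  · unfold Int.ModEq; omega
  · have h8 : 8*((D+3)/8)-3 = D := by omega
    have h9 : 8*((E+3)/8)-3 = E := by omega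
    rw [h8, h9]

lemma useA (Db Dc r1 r2 : ℤ) (h1 : Db % 16 = r1) (h2 : Dc % 16 = r2) (h3 : (r1*r2) % 16 = 1) :
    ∃ k l : ℤ, k ≡ l [ZMOD 2] ∧ Db*Dc = (8*k+1)*(8*l+1) :=
  packA _ ((mulres Db Dc r1 r2 h1 h2).trans h3)

lemma useB (Db Dc r1 r2 : ℤ) (h1 : Db % 16 = r1) (h2 : Dc % 16 = r2) (h3 : (r1*r2) % 16 = 9) :
    ∃ k l : ℤ, ¬ (k ≡ l [ZMOD 2]) ∧ Db*Dc = (8*k+1)*(8*l+1) :=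
  packB _ ((mulres Db Dc r1 r2 h1 h2).trans h3)

lemma useC (Db Dc : ℤ) (hD : (-Db) % 16 = 13 ∨ (-Db) % 16 = 5) (hE : (-Dc) % 16 = (-Db) % 16) :
    ∃ k l : ℤ, (k ≡ l [ZMOD 2]) ∧ Db*Dc = (8*k-3)*(8*l-3) := by
  obtain ⟨k,l,h1,h2⟩ := packC (-Db) (-Dc) hD hE
  exact ⟨k,l,h1, by linear_combination h2⟩

lemma useD (Db Dc : ℤ)
    (hD : ((-Db) % 16 = 13 ∧ (-Dc) % 16 = 5) ∨ ((-Db) % 16 = 5 ∧ (-Dc) % 16 = 13)) :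
    ∃ k l : ℤ, ¬ (k ≡ l [ZMOD 2]) ∧ Db*Dc = (8*k-3)*(8*l-3) := by
  obtain ⟨k,l,h1,h2⟩ := packD (-Db) (-Dc) hD
  exact ⟨k,l,h1, by linear_combination h2⟩

lemma abstract (tb tc Db Dc : ℤ)
    (hm : (Db % 16 = (1-4*tb) % 16 ∧ Dc % 16 = (1-4*tc) % 16)
        ∨ (Db % 16 = (15-4*tb) % 16 ∧ Dc % 16 = (15-4*tc) % 16)
        ∨ (Db % 16 = (7-4*tb) % 16 ∧ Dc % 16 = (7-4*tc) % 16)) :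
    (((tb ≡ 0 [ZMOD 4] ∧ tc ≡ 0 [ZMOD 4]) ∨ (tb ≡ 2 [ZMOD 4] ∧ tc ≡ 2 [ZMOD 4])) →
      ∃ k l : ℤ, k ≡ l [ZMOD 2] ∧ Db * Dc = (8*k+1)*(8*l+1)) ∧
    (((tb ≡ 0 [ZMOD 4] ∧ tc ≡ 2 [ZMOD 4]) ∨ (tb ≡ 2 [ZMOD 4] ∧ tc ≡ 0 [ZMOD 4])) →
      ∃ k l : ℤ, ¬ (k ≡ l [ZMOD 2]) ∧ Db * Dc = (8*k+1)*(8*l+1)) ∧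
    (((tb ≡ 1 [ZMOD 4] ∧ tc ≡ 1 [ZMOD 4]) ∨ (tb ≡ -1 [ZMOD 4] ∧ tc ≡ -1 [ZMOD 4])) →
      ∃ k l : ℤ, k ≡ l [ZMOD 2] ∧ Db * Dc = (8*k-3)*(8*l-3)) ∧
    (((tb ≡ 1 [ZMOD 4] ∧ tc ≡ -1 [ZMOD 4]) ∨ (tb ≡ -1 [ZMOD 4] ∧ tc ≡ 1 [ZMOD 4])) →
      ∃ k l : ℤ, ¬ (k ≡ l [ZMOD 2]) ∧ Db * Dc = (8*k-3)*(8*l-3)) := by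
  simp only [Int.ModEq]
  refine ⟨?_, ?_, ?_, ?_⟩ <;> rintro (⟨h1, h2⟩ | ⟨h1, h2⟩) <;>
    rcases hm with ⟨hb, hc⟩ | ⟨hb, hc⟩ | ⟨hb, hc⟩
  -- conj 1
  · exact useA Db Dc 1 1 (by omega) (by omega) (by norm_num)
  · exact useA Db Dc 15 15 (by omega) (by omega) (by norm_num)
  · exact useA Db Dc 7 7 (by omega) (by omega) (by norm_num)
  · exact useA Db Dc 9 9 (by omega) (by omega) (by norm_num)
  · exact useA Db Dc 7 7 (by omega) (by omega) (by norm_num)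
  · exact useA Db Dc 15 15 (by omega) (by omega) (by norm_num)
  -- conj 2
  · exact useB Db Dc 1 9 (by omega) (by omega) (by norm_num)
  · exact useB Db Dc 15 7 (by omega) (by omega) (by norm_num)
  · exact useB Db Dc 7 15 (by omega) (by omega) (by norm_num)
  · exact useB Db Dc 9 1 (by omega) (by omega) (by norm_num)
  · exact useB Db Dc 7 15 (by omega) (by omega) (by norm_num)
  · exact useB Db Dc 15 7 (by omega) (by omega) (by norm_num)
  -- conj 3
  · exact packC Db Dc (Or.inl (by omega)) (by omega)
  · exact useC Db Dc (Or.inr (by omega)) (by omega)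
  · exact useC Db Dc (Or.inl (by omega)) (by omega)
  · exact packC Db Dc (Or.inr (by omega)) (by omega)
  · exact useC Db Dc (Or.inl (by omega)) (by omega)
  · exact useC Db Dc (Or.inr (by omega)) (by omega)
  -- conj 4
  · exact packD Db Dc (Or.inl ⟨by omega, by omega⟩)
  · exact useD Db Dc (Or.inr ⟨by omega, by omega⟩)
  · exact useD Db Dc (Or.inl ⟨by omega, by omega⟩)
  · exact packD Db Dc (Or.inr ⟨by omega, by omega⟩)
  · exact useD Db Dc (Or.inl ⟨by omega, by omega⟩)
  · exact useD Db Dc (Or.inr ⟨by omega, by omega⟩)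

theorem stmt9 (a : ℕ → ℤ)
    (h : ¬ (bI a 0 + bI a 2 ≡ bI a 1 + bI a 3 [ZMOD 2])) :
    (((bI a 0 * bI a 2 + bI a 1 * bI a 3 ≡ 0 [ZMOD 4] ∧
        cI a 0 * cI a 2 + cI a 1 * cI a 3 ≡ 0 [ZMOD 4]) ∨
      (bI a 0 * bI a 2 + bI a 1 * bI a 3 ≡ 2 [ZMOD 4] ∧
        cI a 0 * cI a 2 + cI a 1 * cI a 3 ≡ 2 [ZMOD 4])) →
      ∃ k l : ℤ, k ≡ l [ZMOD 2] ∧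
        D4 (bI a 0) (bI a 1) (bI a 2) (bI a 3) * D4 (cI a 0) (cI a 1) (cI a 2) (cI a 3) =
          (8 * k + 1) * (8 * l + 1)) ∧
    (((bI a 0 * bI a 2 + bI a 1 * bI a 3 ≡ 0 [ZMOD 4] ∧
        cI a 0 * cI a 2 + cI a 1 * cI a 3 ≡ 2 [ZMOD 4]) ∨
      (bI a 0 * bI a 2 + bI a 1 * bI a 3 ≡ 2 [ZMOD 4] ∧
        cI a 0 * cI a 2 + cI a 1 * cI a 3 ≡ 0 [ZMOD 4])) →
      ∃ k l : ℤ, ¬ (k ≡ l [ZMOD 2]) ∧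
        D4 (bI a 0) (bI a 1) (bI a 2) (bI a 3) * D4 (cI a 0) (cI a 1) (cI a 2) (cI a 3) =
          (8 * k + 1) * (8 * l + 1)) ∧
    (((bI a 0 * bI a 2 + bI a 1 * bI a 3 ≡ 1 [ZMOD 4] ∧
        cI a 0 * cI a 2 + cI a 1 * cI a 3 ≡ 1 [ZMOD 4]) ∨
      (bI a 0 * bI a 2 + bI a 1 * bI a 3 ≡ -1 [ZMOD 4] ∧
        cI a 0 * cI a 2 + cI a 1 * cI a 3 ≡ -1 [ZMOD 4])) →
      ∃ k l : ℤ, k ≡ l [ZMOD 2] ∧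
        D4 (bI a 0) (bI a 1) (bI a 2) (bI a 3) * D4 (cI a 0) (cI a 1) (cI a 2) (cI a 3) =
          (8 * k - 3) * (8 * l - 3)) ∧
    (((bI a 0 * bI a 2 + bI a 1 * bI a 3 ≡ 1 [ZMOD 4] ∧
        cI a 0 * cI a 2 + cI a 1 * cI a 3 ≡ -1 [ZMOD 4]) ∨
      (bI a 0 * bI a 2 + bI a 1 * bI a 3 ≡ -1 [ZMOD 4] ∧
        cI a 0 * cI a 2 + cI a 1 * cI a 3 ≡ 1 [ZMOD 4])) →
      ∃ k l : ℤ, ¬ (k ≡ l [ZMOD 2]) ∧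
        D4 (bI a 0) (bI a 1) (bI a 2) (bI a 3) * D4 (cI a 0) (cI a 1) (cI a 2) (cI a 3) =
          (8 * k - 3) * (8 * l - 3)) := by
  have d0 : bI a 0 - cI a 0 = 2*(a (0+4) + a (0+12)) := by unfold bI cI; ring
  have d1 : bI a 1 - cI a 1 = 2*(a (1+4) + a (1+12)) := by unfold bI cI; ring
  have d2 : bI a 2 - cI a 2 = 2*(a (2+4) + a (2+12)) := by unfold bI cI; ring
  have d3 : bI a 3 - cI a 3 = 2*(a (3+4) + a (3+12)) := by unfold bI cI; ring
  have hne : ¬ ((bI a 0 + bI a 2) % 2 = (bI a 1 + bI a 3) % 2) := h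
  have hm : (D4 (bI a 0) (bI a 1) (bI a 2) (bI a 3) % 16
        = (1-4*(bI a 0 * bI a 2 + bI a 1 * bI a 3)) % 16 ∧
      D4 (cI a 0) (cI a 1) (cI a 2) (cI a 3) % 16
        = (1-4*(cI a 0 * cI a 2 + cI a 1 * cI a 3)) % 16)
    ∨ (D4 (bI a 0) (bI a 1) (bI a 2) (bI a 3) % 16
        = (15-4*(bI a 0 * bI a 2 + bI a 1 * bI a 3)) % 16 ∧
      D4 (cI a 0) (cI a 1) (cI a 2) (cI a 3) % 16
        = (15-4*(cI a 0 * cI a 2 + cI a 1 * cI a 3)) % 16)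
    ∨ (D4 (bI a 0) (bI a 1) (bI a 2) (bI a 3) % 16
        = (7-4*(bI a 0 * bI a 2 + bI a 1 * bI a 3)) % 16 ∧
      D4 (cI a 0) (cI a 1) (cI a 2) (cI a 3) % 16
        = (7-4*(cI a 0 * cI a 2 + cI a 1 * cI a 3)) % 16) := by
    rcases Int.even_or_odd (bI a 0 + bI a 2) with he | ho
    · -- case B : b0+b2 even, b1+b3 odd
      obtain ⟨m, hm'⟩ := he
      have hb02 : (bI a 0 + bI a 2) % 2 = 0 := by omega
      have hb13 : (bI a 1 + bI a 3) % 2 = 1 := by omega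
      have hc02 : (cI a 0 + cI a 2) % 2 = 0 := by omega
      have hc13 : (cI a 1 + cI a 3) % 2 = 1 := by omega
      have Hb := caseB (bI a 0) (bI a 1) (bI a 2) (bI a 3) hb02 hb13
      have Hc := caseB (cI a 0) (cI a 1) (cI a 2) (cI a 3) hc02 hc13
      have hpar : (bI a 0 - cI a 0) % 2 = 0 := by omega
      -- split on parity of b0
      rcases Int.even_or_odd (bI a 0) with ⟨n, hn⟩ | ⟨n, hn⟩
      · right; left
        constructor
        · have h16 : (-1 - 4*(bI a 0 * bI a 2 + bI a 1 * bI a 3) + 8*(bI a 0)) % 16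
              = (15 - 4*(bI a 0 * bI a 2 + bI a 1 * bI a 3)) % 16 := by omega
          omega
        · have hcn : (cI a 0) % 2 = 0 := by omega
          have h16 : (-1 - 4*(cI a 0 * cI a 2 + cI a 1 * cI a 3) + 8*(cI a 0)) % 16
              = (15 - 4*(cI a 0 * cI a 2 + cI a 1 * cI a 3)) % 16 := by omega
          omega
      · right; right
        constructor
        · have h16 : (-1 - 4*(bI a 0 * bI a 2 + bI a 1 * bI a 3) + 8*(bI a 0)) % 16
              = (7 - 4*(bI a 0 * bI a 2 + bI a 1 * bI a 3)) % 16 := by omega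
          omega
        · have hcn : (cI a 0) % 2 = 1 := by omega
          have h16 : (-1 - 4*(cI a 0 * cI a 2 + cI a 1 * cI a 3) + 8*(cI a 0)) % 16
              = (7 - 4*(cI a 0 * cI a 2 + cI a 1 * cI a 3)) % 16 := by omega
          omega
    · -- case A : b0+b2 odd, b1+b3 even
      obtain ⟨m, hm'⟩ := ho
      have hb02 : (bI a 0 + bI a 2) % 2 = 1 := by omega
      have hb13 : (bI a 1 + bI a 3) % 2 = 0 := by omega
      have hc02 : (cI a 0 + cI a 2) % 2 = 1 := by omega
      have hc13 : (cI a 1 + cI a 3) % 2 = 0 := by omega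
      exact Or.inl ⟨caseA (bI a 0) (bI a 1) (bI a 2) (bI a 3) hb02 hb13,
        caseA (cI a 0) (cI a 1) (cI a 2) (cI a 3) hc02 hc13⟩
  exact abstract _ _ _ _ hm
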